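/- arXiv:2303.02185 — 2 statements merged into one kernel-verified Lean document; each statement's English description precedes it below -/
import Mathlib

section
/- Suppose along a trajectory ẋ = f(x), the invariance condition (∇P(y))ᵀ f(y) < 0 holds for all y with P(y) = 0, f is homogeneous of degree zero (f(λy) = λ f(y)), and (∇P(y))ᵀ y > 0 for all y ≠ 0 with P(y) = 0. If x(t) solves ẋ = f(x) with x(t) ≠ 0 and c(t) := τ(x(t)) is differentiable with c > 0 and P(x/c) ≡ 0, then ċ(t) < 0 for all t. Hence τ is strictly decreasing along trajectories. -/
/-- Under the strict inward-crossing condition on `{P = 0}`, positive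
homogeneity of `f`, and Euler-type positivity `(∇P(y))ᵀ y > 0` on `{P = 0} \ {0}`,
the function `c(t) = τ(x(t))` satisfies `ċ(t) < 0` along trajectories of `ẋ = f(x)`. -/
theorem algebraic_lyapunov_decreasing_along_trajectories
    (n : ℕ) (f : (Fin n → ℝ) → (Fin n → ℝ))
    (hf : ∀ (l : ℝ), 0 < l → ∀ y, f (l • y) = l • f y)
    (P : (Fin n → ℝ) → ℝ) (hP : Differentiable ℝ P)
    (hinv : ∀ y : Fin n → ℝ, y ≠ 0 → P y = 0 → fderiv ℝ P y (f y) < 0)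
    (heuler : ∀ y : Fin n → ℝ, y ≠ 0 → P y = 0 → 0 < fderiv ℝ P y y)
    (x : ℝ → (Fin n → ℝ)) (hx : Differentiable ℝ x)
    (hode : ∀ t, deriv x t = f (x t)) (hxne : ∀ t, x t ≠ 0)
    (c : ℝ → ℝ) (hc : Differentiable ℝ c) (hcpos : ∀ t, 0 < c t)
    (hzero : ∀ t, P ((c t)⁻¹ • x t) = 0) :
    ∀ t : ℝ, deriv c t < 0 := by
  intro t
  set y : Fin n → ℝ := (c t)⁻¹ • x t with hy
  have hct : (0:ℝ) < c t := hcpos t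
  have hcne : c t ≠ 0 := ne_of_gt hct
  have hyne : y ≠ 0 := smul_ne_zero (inv_ne_zero hcne) (hxne t)
  have hPy : P y = 0 := hzero t
  have hxy : x t = c t • y := by
    rw [hy, smul_smul, mul_inv_cancel₀ hcne, one_smul]
  have hfx : f (x t) = c t • f y := by
    rw [hxy]; exact hf (c t) hct y
  set d := deriv c t with hd
  have hcd : HasDerivAt c d t := (hc t).hasDerivAt
  have hcid : HasDerivAt (fun s => (c s)⁻¹) (-d / (c t)^2) t := hcd.inv hcne
  have hxd : HasDerivAt x (f (x t)) t := by
    have := (hx t).hasDerivAt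
    rwa [hode t] at this
  have hsd : HasDerivAt (fun s => (c s)⁻¹ • x s)
      ((c t)⁻¹ • f (x t) + (-d / (c t)^2) • x t) t := hcid.smul hxd
  have hcomp : HasDerivAt (fun s => P ((c s)⁻¹ • x s))
      (fderiv ℝ P y ((c t)⁻¹ • f (x t) + (-d / (c t)^2) • x t)) t :=
    (hP y).hasFDerivAt.comp_hasDerivAt t hsd
  have hconst : HasDerivAt (fun s => P ((c s)⁻¹ • x s)) 0 t := by
    have : (fun s => P ((c s)⁻¹ • x s)) = fun _ => (0:ℝ) := funext hzero
    rw [this]; exact hasDerivAt_const t 0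
  have hkey : fderiv ℝ P y ((c t)⁻¹ • f (x t) + (-d / (c t)^2) • x t) = 0 :=
    hcomp.unique hconst
  rw [hfx, hxy, smul_smul, smul_smul, inv_mul_cancel₀ hcne, one_smul,
    map_add, map_smul, smul_eq_mul] at hkey
  have h1 : fderiv ℝ P y (f y) < 0 := hinv y hyne hPy
  have h2 : 0 < fderiv ℝ P y y := heuler y hyne hPy
  have hsolve : d = (c t) * fderiv ℝ P y (f y) / fderiv ℝ P y y := by
    field_simp at hkey ⊢
    nlinarith [hkey, h2, sq_nonneg (c t)]
  rw [hd] at hsolve ⊢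
  rw [hsolve]
  exact div_neg_of_neg_of_pos (by nlinarith) h2
end

section
/- The function V(x₁,x₂) = (x₂ − x₁ + √((x₂−x₁)² + 2(x₁²+x₂²)))/2 satisfies: V(x) > 0 for all x ≠ 0, V(0) = 0, and V is positively homogeneous of degree 1. -/
/-- `V(x₁,x₂) = (x₂ − x₁ + √((x₂−x₁)² + 2(x₁²+x₂²)))/2` is positive away
from the origin, vanishes at the origin, and is positively homogeneous of degree 1. -/
theorem example_V_positive_definite_homogeneous
    (V : ℝ → ℝ → ℝ)
    (hV : ∀ x₁ x₂, V x₁ x₂ =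
      (x₂ - x₁ + Real.sqrt ((x₂ - x₁) ^ 2 + 2 * (x₁ ^ 2 + x₂ ^ 2))) / 2) :
    (∀ x₁ x₂ : ℝ, (x₁, x₂) ≠ (0, 0) → 0 < V x₁ x₂) ∧
    V 0 0 = 0 ∧
    (∀ (l : ℝ), 0 < l → ∀ x₁ x₂, V (l * x₁) (l * x₂) = l * V x₁ x₂) := by
  refine ⟨?_, ?_, ?_⟩
  · intro x₁ x₂ hne
    rw [hV]
    have hpos : 0 < x₁ ^ 2 + x₂ ^ 2 := by
      have : x₁ ≠ 0 ∨ x₂ ≠ 0 := by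
        by_contra hc
        push_neg at hc
        exact hne (by simp [hc.1, hc.2])
      rcases this with h1 | h1 <;> positivity
    have hlt : (x₁ - x₂) ^ 2 < (x₂ - x₁) ^ 2 + 2 * (x₁ ^ 2 + x₂ ^ 2) := by nlinarith
    have h1 : x₁ - x₂ < Real.sqrt ((x₂ - x₁) ^ 2 + 2 * (x₁ ^ 2 + x₂ ^ 2)) := by
      rcases le_or_gt (x₁ - x₂) 0 with h | h
      · exact lt_of_le_of_lt h (Real.sqrt_pos.mpr (by nlinarith))
      · have := Real.sqrt_lt_sqrt (by positivity) hlt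
        rwa [Real.sqrt_sq h.le] at this
    linarith
  · rw [hV]; norm_num
  · intro l hl x₁ x₂
    rw [hV, hV]
    have key : (l * x₂ - l * x₁) ^ 2 + 2 * ((l * x₁) ^ 2 + (l * x₂) ^ 2)
        = l ^ 2 * ((x₂ - x₁) ^ 2 + 2 * (x₁ ^ 2 + x₂ ^ 2)) := by ring
    rw [key, Real.sqrt_mul (by positivity), Real.sqrt_sq hl.le]
    ring
end
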